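/- Converting a reducing-or-covering separators-set pair to a partition: given a (T,c)-reducing-or-covering separators-set pair (𝒮, C) of G, define Z as the union of all separators in 𝒮 and let X_1,…,X_ℓ be the connected components of G − Z. Then ({Z, X_1,…,X_ℓ}, C) is a (T,c)-reducing-or-covering partition-set pair. -/
import Mathlib


variable {V : Type*} [Fintype V] [DecidableEq V]

/-- `S` is an `(A,B)`-weak separator in `G`. -/
def IsWeakSeparator (G : SimpleGraph V) (A B S : Finset V) : Prop :=
  ∀ a ∈ A, ∀ b ∈ B, ∀ p : G.Walk a b, ∃ v ∈ p.support, v ∈ S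

/-- `S` is a minimum `(A,B)`-weak separator in `G`. -/
def IsMinWeakSeparator (G : SimpleGraph V) (A B S : Finset V) : Prop :=
  IsWeakSeparator G A B S ∧ ∀ S' : Finset V, IsWeakSeparator G A B S' → S.card ≤ S'.card

/-- `μ^T(A,B)`: the minimum number of non-terminal vertices over all minimum
`(A,B)`-weak separators. -/
noncomputable def muT (G : SimpleGraph V) (T A B : Finset V) : ℕ :=
  sInf {n | ∃ S : Finset V, IsMinWeakSeparator G A B S ∧ (S \ T).card = n}

/-- A minimum `(A,B)`-weak separator `S` is `T`-brittle if `|S − T| = μ^T(A,B)`. -/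
def IsBrittle (G : SimpleGraph V) (T A B S : Finset V) : Prop :=
  IsMinWeakSeparator G A B S ∧ (S \ T).card = muT G T A B

/-- `W` is an `(x,y)`-separator in `G`. -/
def IsSTSep (G : SimpleGraph V) (x y : V) (W : Finset V) : Prop :=
  x ∉ W ∧ y ∉ W ∧ ∀ p : G.Walk x y, ∃ v ∈ p.support, v ∈ W

/-- `(𝒮, C)` is a `(T,c)`-reducing-or-covering separators-set pair: for every `A, B ⊆ T`
with `μ(A,B) ≤ c`, either `C` covers some minimum `(A,B)`-weak separator, or some member
of `𝒮` contains a non-terminal vertex of some brittle minimum `(A,B)`-weak separator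
(reduces it), or some member of `𝒮` separates two vertices of some brittle minimum
`(A,B)`-weak separator (splits it). -/
def IsROCSepPair (G : SimpleGraph V) (T : Finset V) (c : ℕ)
    (𝒮 : Finset (Finset V)) (C : Finset V) : Prop :=
  ∀ A B : Finset V, A ⊆ T → B ⊆ T →
    (∃ S : Finset V, IsWeakSeparator G A B S ∧ S.card ≤ c) →
    (∃ S : Finset V, IsMinWeakSeparator G A B S ∧ S ⊆ C) ∨
    (∃ S : Finset V, IsBrittle G T A B S ∧ ∃ W ∈ 𝒮, ∃ v ∈ W, v ∈ S ∧ v ∉ T) ∨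
    (∃ S : Finset V, IsBrittle G T A B S ∧
      ∃ W ∈ 𝒮, ∃ x ∈ S, ∃ y ∈ S, x ≠ y ∧ IsSTSep G x y W)

open Classical in
/-- The open neighborhood `N_G(X)`. -/
noncomputable def nbhd (G : SimpleGraph V) (X : Finset V) : Finset V :=
  Finset.univ.filter (fun v => v ∉ X ∧ ∃ x ∈ X, G.Adj v x)

/-- The closed neighborhood `N_G[X] = X ∪ N_G(X)`. -/
noncomputable def closedNbhd (G : SimpleGraph V) (X : Finset V) : Finset V :=
  X ∪ nbhd G X

open Classical in
/-- The connected component of `v` in `G − Z` (for `v ∉ Z`): the set of vertices `u ∉ Z`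
reachable from `v` by a walk avoiding `Z`. -/
noncomputable def compOff (G : SimpleGraph V) (Z : Finset V) (v : V) : Finset V :=
  Finset.univ.filter (fun u => u ∉ Z ∧ ∃ p : G.Walk v u, ∀ w ∈ p.support, w ∉ Z)


lemma mem_compOff {G : SimpleGraph V} {Z : Finset V} {v u : V} :
    u ∈ compOff G Z v ↔ u ∉ Z ∧ ∃ p : G.Walk v u, ∀ w ∈ p.support, w ∉ Z := by
  simp [compOff]

lemma compOff_eq_of_walk {G : SimpleGraph V} {Z : Finset V} {u v : V}
    (p : G.Walk u v) (hp : ∀ w ∈ p.support, w ∉ Z) :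
    compOff G Z u = compOff G Z v := by
  have hu : u ∉ Z := hp u p.start_mem_support
  ext w
  simp only [mem_compOff]
  constructor
  · rintro ⟨hw, q, hq⟩
    refine ⟨hw, p.reverse.append q, ?_⟩
    intro x hx
    rw [SimpleGraph.Walk.mem_support_append_iff] at hx
    rcases hx with hx | hx
    · exact hp x (by simpa using hx)
    · exact hq x hx
  · rintro ⟨hw, q, hq⟩
    refine ⟨hw, p.append q, ?_⟩
    intro x hx
    rw [SimpleGraph.Walk.mem_support_append_iff] at hx
    rcases hx with hx | hx
    · exact hp x hx
    · exact hq x hx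

/-- From a vertex in the closed neighborhood of `compOff G Z v` which is not in `W ⊆ Z`,
there is a walk to `v` avoiding `W`. -/
lemma walk_of_mem_closedNbhd {G : SimpleGraph V} {Z W : Finset V} (hWZ : W ⊆ Z)
    {v x : V} (hx : x ∈ closedNbhd G (compOff G Z v)) (hxW : x ∉ W) :
    ∃ p : G.Walk x v, ∀ w ∈ p.support, w ∉ W := by
  rcases Finset.mem_union.mp hx with hx | hx
  · obtain ⟨-, q, hq⟩ := mem_compOff.mp hx
    exact ⟨q.reverse, fun w hw => fun hwW => hq w (by simpa using hw) (hWZ hwW)⟩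
  · simp only [nbhd, Finset.mem_filter] at hx
    obtain ⟨-, -, x', hx', hadj⟩ := hx
    obtain ⟨-, q, hq⟩ := mem_compOff.mp hx'
    refine ⟨SimpleGraph.Walk.cons hadj q.reverse, ?_⟩
    intro w hw
    rw [SimpleGraph.Walk.support_cons, List.mem_cons] at hw
    rcases hw with rfl | hw
    · exact hxW
    · exact fun hwW => hq w (by simpa using hw) (hWZ hwW)

/-- Converting a `(T,c)`-reducing-or-covering separators-set pair `(𝒮, C)` to a partition:
with `Z` the union of all separators in `𝒮` and the parts `X_1, …, X_ℓ` the connected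
components of `G − Z`, the pair `({Z, X_1, …, X_ℓ}, C)` is a `(T,c)`-reducing-or-covering
partition-set pair: `Z` separates distinct components, and for every `A, B ⊆ T` with
`μ(A,B) ≤ c` there is a minimum `(A,B)`-weak separator `S` such that `C` covers `S`, or
`Π` splits `S` (`|S ∩ N[X_i]| ≤ |S| − 1` for all parts), or `Π` `T`-hits `S`
(`|(S ∩ X_i) − T| ≤ μ^T(A,B) − 1` for all parts). -/
theorem rocSepPair_to_rocPartitionPair (G : SimpleGraph V) (T : Finset V) (c : ℕ)
    (hc : 0 < c) (𝒮 : Finset (Finset V)) (C : Finset V)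
    (hroc : IsROCSepPair G T c 𝒮 C) :
    (∀ u v : V, u ∉ 𝒮.biUnion id → v ∉ 𝒮.biUnion id →
        compOff G (𝒮.biUnion id) u ≠ compOff G (𝒮.biUnion id) v →
        ∀ p : G.Walk u v, ∃ w ∈ p.support, w ∈ 𝒮.biUnion id) ∧
    (∀ A B : Finset V, A ⊆ T → B ⊆ T →
      (∃ S : Finset V, IsWeakSeparator G A B S ∧ S.card ≤ c) →
      ∃ S : Finset V, IsMinWeakSeparator G A B S ∧
        (S ⊆ C ∨
          (∀ v : V, v ∉ 𝒮.biUnion id →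
            (S ∩ closedNbhd G (compOff G (𝒮.biUnion id) v)).card + 1 ≤ S.card) ∨
          (∀ v : V, v ∉ 𝒮.biUnion id →
            ((S ∩ compOff G (𝒮.biUnion id) v) \ T).card + 1 ≤ muT G T A B))) := by
  constructor
  · intro u v hu hv hne p
    by_contra h
    push_neg at h
    exact hne (compOff_eq_of_walk p h)
  · intro A B hA hB hex
    set Z : Finset V := 𝒮.biUnion id with hZ
    rcases hroc A B hA hB hex with ⟨S, hS, hSC⟩ | ⟨S, hS, W, hW𝒮, x, hxW, hxS, hxT⟩ |
      ⟨S, hS, W, hW𝒮, x, hxS, y, hyS, hxy, hsep⟩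
    · exact ⟨S, hS, Or.inl hSC⟩
    · -- reduce case: T-hit branch
      refine ⟨S, hS.1, Or.inr (Or.inr ?_)⟩
      intro v hv
      have hWZ : W ⊆ Z := fun w hw => Finset.mem_biUnion.mpr ⟨W, hW𝒮, hw⟩
      have hxZ : x ∈ Z := hWZ hxW
      have hxST : x ∈ S \ T := Finset.mem_sdiff.mpr ⟨hxS, hxT⟩
      have hss : (S ∩ compOff G Z v) \ T ⊂ S \ T := by
        refine Finset.ssubset_iff_of_subset ?_ |>.mpr ⟨x, hxST, ?_⟩
        · intro w hw
          rw [Finset.mem_sdiff, Finset.mem_inter] at hw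
          exact Finset.mem_sdiff.mpr ⟨hw.1.1, hw.2⟩
        · intro hx
          rw [Finset.mem_sdiff, Finset.mem_inter] at hx
          exact (mem_compOff.mp hx.1.2).1 hxZ
      have hlt := Finset.card_lt_card hss
      have := hS.2
      omega
    · -- split case
      refine ⟨S, hS.1, Or.inr (Or.inl ?_)⟩
      intro v hv
      have hWZ : W ⊆ Z := fun w hw => Finset.mem_biUnion.mpr ⟨W, hW𝒮, hw⟩
      obtain ⟨hxW, hyW, hWsep⟩ := hsep
      have key : x ∉ closedNbhd G (compOff G Z v) ∨ y ∉ closedNbhd G (compOff G Z v) := by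
        by_contra h
        push_neg at h
        obtain ⟨px, hpx⟩ := walk_of_mem_closedNbhd hWZ h.1 hxW
        obtain ⟨py, hpy⟩ := walk_of_mem_closedNbhd hWZ h.2 hyW
        obtain ⟨w, hw, hwW⟩ := hWsep (px.append py.reverse)
        rw [SimpleGraph.Walk.mem_support_append_iff] at hw
        rcases hw with hw | hw
        · exact hpx w hw hwW
        · exact hpy w (by simpa using hw) hwW
      rcases key with hk | hk
      · have hss : S ∩ closedNbhd G (compOff G Z v) ⊂ S :=
          Finset.ssubset_iff_of_subset Finset.inter_subset_left |>.mpr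
            ⟨x, hxS, fun h => hk (Finset.mem_inter.mp h).2⟩
        have := Finset.card_lt_card hss
        omega
      · have hss : S ∩ closedNbhd G (compOff G Z v) ⊂ S :=
          Finset.ssubset_iff_of_subset Finset.inter_subset_left |>.mpr
            ⟨y, hyS, fun h => hk (Finset.mem_inter.mp h).2⟩
        have := Finset.card_lt_card hss
        omega
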